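/- Let R be a ring with 1 and M a nontrivial left R-module (M has at least two elements). There do not exist coefficients α, β, γ, α', β', γ' ∈ R with α + β + γ = 1 and α' + β' + γ' = 1 such that the operations p(x,y,z) = α•x + β•y + γ•z and q(x,y,z) = α'•x + β'•y + γ'•z on M satisfy p(x,x,y) = p(x,y,y) and p(x,y,x) = q(y,x,x) = q(x,y,x) = q(x,x,y) for all x,y ∈ M. (Hence the system p(x,x,y) ≈ p(x,y,y), p(x,y,x) ≈ q(y,x,x) ≈ q(x,y,x) ≈ q(x,x,y) fails in every full idempotent reduct of a nontrivial module, in particular over every finite ring.) -/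

import Mathlib

theorem subset1_fails_in_modules {R M : Type*} [Ring R] [AddCommGroup M] [Module R M]
    (hM : ∃ a b : M, a ≠ b) :
    ¬ ∃ α β γ α' β' γ' : R,
      α + β + γ = 1 ∧ α' + β' + γ' = 1 ∧
      (∀ x y : M,
        (α • x + β • x + γ • y = α • x + β • y + γ • y) ∧
        (α • x + β • y + γ • x = α' • y + β' • x + γ' • x) ∧
        (α' • y + β' • x + γ' • x = α' • x + β' • y + γ' • x) ∧
        (α' • x + β' • y + γ' • x = α' • x + β' • x + γ' • y)) := by
  rintro ⟨α, β, γ, α', β', γ', h1, h2, h⟩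
  obtain ⟨a, b, hab⟩ := hM
  apply hab
  have key : ∀ y : M, y = 0 := by
    intro y
    obtain ⟨e1, e2, e3, e4⟩ := h (0 : M) y
    simp only [smul_zero, zero_add, add_zero] at e1 e2 e3 e4
    -- e1 : γ • y = β • y + γ • y  ⇒ β • y = 0
    have hβ : β • y = 0 := right_eq_add.mp e1
    have hα' : α' • y = 0 := e2.symm.trans hβ
    have hβ' : β' • y = 0 := e3.symm.trans hα'
    have hγ' : γ' • y = 0 := e4.symm.trans hβ'
    have : (α' + β' + γ') • y = 0 := by
      rw [add_smul, add_smul, hα', hβ', hγ']; abel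
    rwa [h2, one_smul] at this
  exact sub_eq_zero.mp (key (a - b))
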